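/- The price of stability of every n-player Shapley cost sharing game with nondecreasing set-dependent cost functions is at most n·H_n: there exists a pure Nash equilibrium P such that C(P) ≤ n·H_n · C(Q) for every strategy vector Q, where H_n = Σ_{l=1}^{n} 1/l. -/
import Mathlib


open Finset

def preSet {N : Type*} [DecidableEq N] (S : Finset N)
    (π : {x // x ∈ S} ≃ Fin S.card) (i : {x // x ∈ S}) : Finset N :=
  (S.attach.filter (fun j => π j < π i)).image Subtype.val

noncomputable def shapley {N : Type*} [DecidableEq N]
    (C : Finset N → ℝ) (S : Finset N) (i : N) : ℝ :=
  if hi : i ∈ S then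
    (1 / (Nat.factorial S.card : ℝ)) *
      ∑ π : {x // x ∈ S} ≃ Fin S.card,
        (C (preSet S π ⟨i, hi⟩ ∪ {i}) - C (preSet S π ⟨i, hi⟩))
  else 0

/-- `users P r = P^r = {i : r ∈ P_i}`, the set of players using resource `r`. -/
def users {n : ℕ} {R : Type*} [DecidableEq R]
    (P : Fin n → Finset R) (r : R) : Finset (Fin n) :=
  Finset.univ.filter (fun i => r ∈ P i)

/-- The private cost of player `i` under Shapley cost sharing:
`C_i(P) = Σ_{r ∈ P_i} φ_i(C^r, P^r)`. -/
noncomputable def privCost {n : ℕ} {R : Type*} [DecidableEq R]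
    (Cr : R → Finset (Fin n) → ℝ) (P : Fin n → Finset R) (i : Fin n) : ℝ :=
  ∑ r ∈ P i, shapley (Cr r) (users P r) i

/-- The social cost `C(P) = Σ_{r ∈ R} C^r(P^r)`. -/
noncomputable def socCost {n : ℕ} {R : Type*} [Fintype R] [DecidableEq R]
    (Cr : R → Finset (Fin n) → ℝ) (P : Fin n → Finset R) : ℝ :=
  ∑ r : R, Cr r (users P r)

/-- The Shapley potential
`Φ(P) = Σ_{r ∈ R} Σ_{∅ ≠ T ⊆ P^r} ((|P^r|-|T|)!(|T|-1)!/|P^r|!) · C^r(T)`. -/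
noncomputable def pot {n : ℕ} {R : Type*} [Fintype R] [DecidableEq R]
    (Cr : R → Finset (Fin n) → ℝ) (P : Fin n → Finset R) : ℝ :=
  ∑ r : R, ∑ T ∈ (users P r).powerset.filter (fun T => T.Nonempty),
    ((Nat.factorial ((users P r).card - T.card) : ℝ) *
        (Nat.factorial (T.card - 1) : ℝ) / (Nat.factorial (users P r).card : ℝ)) *
      Cr r T

/-- `P` is a pure Nash equilibrium of the Shapley cost sharing game. -/
def isPNE {n : ℕ} {R : Type*} [DecidableEq R]
    (Strat : Fin n → Set (Finset R)) (Cr : R → Finset (Fin n) → ℝ)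
    (P : Fin n → Finset R) : Prop :=
  (∀ i, P i ∈ Strat i) ∧
    ∀ i, ∀ Q ∈ Strat i, privCost Cr P i ≤ privCost Cr (Function.update P i Q) i

/-- `H_k`, the `k`-th harmonicNum number. -/
noncomputable def harmonicNum (k : ℕ) : ℝ := ∑ l ∈ Finset.Icc 1 k, (1 / (l : ℝ))

section Fiber
variable {α : Type*} [Fintype α] [DecidableEq α]

lemma pos_eq_card (π : α ≃ Fin (Fintype.card α)) (i : α) :
    ((π i : ℕ)) = (univ.filter (fun j => π j < π i)).card := by
  have h : (univ.filter (fun j => π j < π i)) = (Finset.Iio (π i)).image π.symm := by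
    ext j
    simp only [mem_filter, mem_univ, true_and, mem_image, Finset.mem_Iio,
      Equiv.symm_apply_eq]
    constructor
    · intro hj; exact ⟨π j, hj, rfl⟩
    · rintro ⟨k, hk, rfl⟩; exact hk
  rw [h, Finset.card_image_of_injective _ π.symm.injective, Fin.card_Iio]

lemma fiber_card (i : α) (A : Finset α) (hA : A ⊆ univ.erase i) :
    ((univ : Finset (α ≃ Fin (Fintype.card α))).filter
        (fun π => univ.filter (fun j => π j < π i) = A)).card
      = Nat.factorial A.card * Nat.factorial (Fintype.card α - 1 - A.card) := by
  classical
  set s := Fintype.card α with hs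
  set a := A.card with ha
  set B : Finset α := (univ.erase i) \ A with hBdef
  have hiA : i ∉ A := fun h => (Finset.mem_erase.1 (hA h)).1 rfl
  have hiB : i ∉ B := by simp [hBdef]
  have hspos : 0 < s := Fintype.card_pos_iff.2 ⟨i⟩
  have hcard_erase : (univ.erase i).card = s - 1 := by
    rw [Finset.card_erase_of_mem (mem_univ i), Finset.card_univ]
  have hale : a ≤ s - 1 := hcard_erase ▸ Finset.card_le_card hA
  have hb : B.card = s - 1 - a := by
    rw [hBdef, Finset.card_sdiff_of_subset hA, hcard_erase]
  set b := s - 1 - a with hbdef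
  have has : a < s := by omega
  have htri : ∀ x : α, x ∉ A → x ∉ B → x = i := by
    intro x hxA hxB
    by_contra hxi
    exact hxB (by simp [hBdef, hxA, hxi])
  -- membership facts for π in the fiber
  have key : ∀ (π : α ≃ Fin s), univ.filter (fun j => π j < π i) = A →
      ((π i : ℕ) = a ∧ (∀ x ∈ A, (π x : ℕ) < a) ∧ (∀ x ∈ B, a < (π x : ℕ))) := by
    intro π h
    have hmem : ∀ j, π j < π i ↔ j ∈ A := by
      intro j; rw [← h]; simp
    have hpi : (π i : ℕ) = a := by rw [pos_eq_card π i, h]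
    refine ⟨hpi, fun x hx => ?_, fun x hx => ?_⟩
    · have := (hmem x).2 hx
      rw [Fin.lt_def] at this; omega
    · have hxB := hx
      rw [hBdef, Finset.mem_sdiff, Finset.mem_erase] at hxB
      have h1 : ¬ (π x < π i) := fun hc => hxB.2 ((hmem x).1 hc)
      have h2 : π x ≠ π i := fun hc => hxB.1.1 (π.injective hc)
      rw [Fin.lt_def, not_lt] at h1
      have : (π x : ℕ) ≠ (π i : ℕ) := fun hc => h2 (Fin.ext hc)
      omega
  rw [← Fintype.card_subtype]
  -- the forward map
  have hcardA : Fintype.card {x // x ∈ A} = a := Fintype.card_coe A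
  have hcardB : Fintype.card {x // x ∈ B} = b := by rw [Fintype.card_coe, hb]
  set Fib := {π : α ≃ Fin s // univ.filter (fun j => π j < π i) = A} with hFib
  have bij : ∀ π : Fib, Function.Bijective
      (fun x : {x // x ∈ A} => (⟨(π.1 x.1 : ℕ), by
        have := (key π.1 π.2).2.1 x.1 x.2; omega⟩ : Fin a)) := by
    intro π
    rw [Fintype.bijective_iff_injective_and_card]
    refine ⟨fun x y hxy => ?_, by simp [hcardA]⟩
    apply Subtype.ext
    apply π.1.injective
    apply Fin.ext
    simpa using congrArg Fin.val hxy
  have bijB : ∀ π : Fib, Function.Bijective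
      (fun x : {x // x ∈ B} => (⟨(π.1 x.1 : ℕ) - (a + 1), by
        have h1 := (key π.1 π.2).2.2 x.1 x.2
        have h2 : (π.1 x.1 : ℕ) < s := (π.1 x.1).isLt
        omega⟩ : Fin b)) := by
    intro π
    rw [Fintype.bijective_iff_injective_and_card]
    refine ⟨fun x y hxy => ?_, by simp [hcardB]⟩
    apply Subtype.ext
    apply π.1.injective
    apply Fin.ext
    have h1 := (key π.1 π.2).2.2 x.1 x.2
    have h2 := (key π.1 π.2).2.2 y.1 y.2
    have := congrArg Fin.val hxy
    simp only at this
    omega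
  set F : Fib → ({x // x ∈ A} ≃ Fin a) × ({x // x ∈ B} ≃ Fin b) :=
    fun π => (Equiv.ofBijective _ (bij π), Equiv.ofBijective _ (bijB π)) with hF
  have hFbij : Function.Bijective F := by
    constructor
    · rintro ⟨π, hπ⟩ ⟨π', hπ'⟩ he
      have h1 := congrArg Prod.fst he
      have h2 := congrArg Prod.snd he
      simp only [hF] at h1 h2
      apply Subtype.ext
      show π = π'
      apply Equiv.ext
      intro x
      by_cases hxA : x ∈ A
      · have := congrArg (fun (e : {x // x ∈ A} ≃ Fin a) => (e ⟨x, hxA⟩ : ℕ)) h1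
        simp only [Equiv.ofBijective_apply] at this
        exact Fin.ext this
      · by_cases hxB : x ∈ B
        · have h3 := congrArg (fun (e : {x // x ∈ B} ≃ Fin b) => (e ⟨x, hxB⟩ : ℕ)) h2
          have h4 : (π x : ℕ) - (a + 1) = (π' x : ℕ) - (a + 1) := h3
          have k1 := (key π hπ).2.2 x hxB
          have k2 := (key π' hπ').2.2 x hxB
          exact Fin.ext (by omega)
        · have hx := htri x hxA hxB
          subst hx
          exact Fin.ext (by rw [(key π hπ).1, (key π' hπ').1])
    · rintro ⟨σ, τ⟩
      -- construct the permutation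
      have hg : ∀ x : α, x ∈ A ∨ x ∈ B ∨ x = i := by
        intro x
        by_cases hxA : x ∈ A
        · exact Or.inl hxA
        · by_cases hxB : x ∈ B
          · exact Or.inr (Or.inl hxB)
          · exact Or.inr (Or.inr (htri x hxA hxB))
      set g : α → Fin s := fun x =>
        if hxA : x ∈ A then ⟨(σ ⟨x, hxA⟩ : ℕ), by have := (σ ⟨x, hxA⟩).isLt; omega⟩
        else if hxB : x ∈ B then ⟨a + 1 + (τ ⟨x, hxB⟩ : ℕ), by
          have := (τ ⟨x, hxB⟩).isLt; omega⟩
        else ⟨a, has⟩ with hgdef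
      have hgA : ∀ (x) (hxA : x ∈ A), (g x : ℕ) = (σ ⟨x, hxA⟩ : ℕ) := by
        intro x hxA; simp [hgdef, hxA]
      have hgB : ∀ (x) (hxB : x ∈ B), (g x : ℕ) = a + 1 + (τ ⟨x, hxB⟩ : ℕ) := by
        intro x hxB
        have hxA : x ∉ A := by
          intro hc; rw [hBdef] at hxB; exact (Finset.mem_sdiff.1 hxB).2 hc
        simp [hgdef, hxA, hxB]
      have hgi : (g i : ℕ) = a := by simp [hgdef, hiA, hiB]
      have hginj : Function.Injective g := by
        intro x y hxy
        have hv := congrArg Fin.val hxy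
        rcases hg x with hx | hx | hx <;> rcases hg y with hy | hy | hy
        · have := hgA x hx; have := hgA y hy
          have : (σ ⟨x, hx⟩ : ℕ) = (σ ⟨y, hy⟩ : ℕ) := by omega
          have := σ.injective (Fin.ext this)
          exact congrArg Subtype.val (by exact this)
        · have h1 := hgA x hx; have h2 := hgB y hy
          have := (σ ⟨x, hx⟩).isLt; omega
        · subst hy; have h1 := hgA x hx; have := (σ ⟨x, hx⟩).isLt
          rw [hgi] at hv; omega
        · have h1 := hgB x hx; have h2 := hgA y hy
          have := (σ ⟨y, hy⟩).isLt; omega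
        · have h1 := hgB x hx; have h2 := hgB y hy
          have : (τ ⟨x, hx⟩ : ℕ) = (τ ⟨y, hy⟩ : ℕ) := by omega
          have := τ.injective (Fin.ext this)
          exact congrArg Subtype.val (by exact this)
        · subst hy; have h1 := hgB x hx; rw [hgi] at hv; omega
        · subst hx; have h2 := hgA y hy; have := (σ ⟨y, hy⟩).isLt
          rw [hgi] at hv; omega
        · subst hx; have h2 := hgB y hy; rw [hgi] at hv; omega
        · subst hx; subst hy; rfl
      have hgbij : Function.Bijective g :=
        (Fintype.bijective_iff_injective_and_card g).2 ⟨hginj, by simp [hs]⟩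
      set π : α ≃ Fin s := Equiv.ofBijective g hgbij with hπdef
      have hπapp : ∀ x, π x = g x := fun x => rfl
      have hcond : univ.filter (fun j => π j < π i) = A := by
        ext j
        simp only [mem_filter, mem_univ, true_and]
        rw [hπapp, hπapp, Fin.lt_def, hgi]
        constructor
        · intro hj
          rcases hg j with h | h | h
          · exact h
          · have := hgB j h; omega
          · subst h; rw [hgi] at hj; omega
        · intro hj
          have := hgA j hj
          have := (σ ⟨j, hj⟩).isLt
          omega
      refine ⟨⟨π, hcond⟩, ?_⟩
      simp only [hF]
      rw [Prod.mk.injEq]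
      constructor
      · apply Equiv.ext
        intro x
        apply Fin.ext
        show ((g x.1 : ℕ)) = (σ x : ℕ)
        have := hgA x.1 x.2
        simp only [Subtype.eta] at this ⊢
        omega
      · apply Equiv.ext
        intro x
        apply Fin.ext
        show ((g x.1 : ℕ) - (a + 1)) = (τ x : ℕ)
        have := hgB x.1 x.2
        simp only [Subtype.eta] at this ⊢
        omega
  rw [Fintype.card_of_bijective hFbij, Fintype.card_prod,
    Fintype.card_equiv (Fintype.equivFinOfCardEq hcardA),
    Fintype.card_equiv (Fintype.equivFinOfCardEq hcardB), hcardA, hcardB]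

end Fiber

section SumPerm
variable {α : Type*} [Fintype α] [DecidableEq α]

lemma fiber_card' (m : ℕ) (hm : Fintype.card α = m) (i : α) (A : Finset α)
    (hA : A ⊆ univ.erase i) :
    ((univ : Finset (α ≃ Fin m)).filter
        (fun π => univ.filter (fun j => π j < π i) = A)).card
      = Nat.factorial A.card * Nat.factorial (m - 1 - A.card) := by
  subst hm; exact fiber_card i A hA

lemma sum_perm (m : ℕ) (hm : Fintype.card α = m) (i : α) (f : Finset α → ℝ) :
    ∑ π : α ≃ Fin m, f (univ.filter (fun j => π j < π i)) =
      ∑ A ∈ (univ.erase i).powerset,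
        ((Nat.factorial A.card * Nat.factorial (m - 1 - A.card) : ℕ) : ℝ) * f A := by
  classical
  rw [← Finset.sum_fiberwise_of_maps_to
    (g := fun π : α ≃ Fin m => univ.filter (fun j => π j < π i))
    (t := (univ.erase i).powerset)
    (fun π _ => by
      simp only [Finset.mem_powerset]
      intro j hj
      simp only [mem_filter, mem_univ, true_and] at hj
      exact Finset.mem_erase.2 ⟨fun h => absurd (h ▸ hj) (lt_irrefl _), mem_univ j⟩)
    (fun π => f (univ.filter (fun j => π j < π i)))]
  apply Finset.sum_congr rfl
  intro A hA
  rw [Finset.mem_powerset] at hA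
  have : ∀ π ∈ (univ : Finset (α ≃ Fin m)).filter
      (fun π => univ.filter (fun j => π j < π i) = A),
      f (univ.filter (fun j => π j < π i)) = f A := by
    intro π hπ
    rw [(Finset.mem_filter.1 hπ).2]
  rw [Finset.sum_congr rfl this, Finset.sum_const, fiber_card' m hm i A hA,
    nsmul_eq_mul]

end SumPerm

section Shapley
variable {N : Type*} [DecidableEq N]

lemma shapley_eq_sum (C : Finset N → ℝ) (S : Finset N) (i : N) (hi : i ∈ S) :
    shapley C S i = ∑ A ∈ (S.erase i).powerset,
      ((Nat.factorial A.card * Nat.factorial (S.card - 1 - A.card) : ℝ) /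
          (Nat.factorial S.card : ℝ)) * (C (A ∪ {i}) - C A) := by
  classical
  rw [shapley, dif_pos hi]
  have hpre : ∀ (π : {x // x ∈ S} ≃ Fin S.card),
      preSet S π ⟨i, hi⟩ =
        (univ.filter (fun j => π j < π ⟨i, hi⟩)).image Subtype.val := by
    intro π
    rw [preSet, ← Finset.univ_eq_attach]
  have := sum_perm (α := {x // x ∈ S}) S.card (Fintype.card_coe S) ⟨i, hi⟩
    (fun A => C (A.image Subtype.val ∪ {i}) - C (A.image Subtype.val))
  simp only [hpre]
  rw [this, Finset.mul_sum]
  -- now reindex by image val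
  have hinj : Function.Injective (fun A : Finset {x // x ∈ S} => A.image Subtype.val) :=
    Finset.image_injective Subtype.val_injective
  have himg : ((univ.erase (⟨i, hi⟩ : {x // x ∈ S})).powerset).image
      (fun A => A.image Subtype.val) = (S.erase i).powerset := by
    ext A
    simp only [Finset.mem_image, Finset.mem_powerset]
    constructor
    · rintro ⟨A', hA', rfl⟩
      intro x hx
      rcases Finset.mem_image.1 hx with ⟨y, hy, rfl⟩
      have := hA' hy
      rw [Finset.mem_erase] at this ⊢
      exact ⟨fun h => this.1 (Subtype.ext h), y.2⟩
    · intro hA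
      refine ⟨S.attach.filter (fun x => x.1 ∈ A), ?_, ?_⟩
      · intro x hx
        rw [Finset.mem_filter] at hx
        have := hA hx.2
        rw [Finset.mem_erase] at this
        exact Finset.mem_erase.2 ⟨fun h => this.1 (congrArg Subtype.val h), mem_univ x⟩
      · ext x
        simp only [Finset.mem_image, Finset.mem_filter, Finset.mem_attach, true_and]
        constructor
        · rintro ⟨y, hy, rfl⟩; exact hy
        · intro hx
          have hxS : x ∈ S := Finset.mem_of_mem_erase (hA hx)
          exact ⟨⟨x, hxS⟩, hx, rfl⟩
  rw [← himg, Finset.sum_image (fun A _ A' _ h => hinj h)]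
  apply Finset.sum_congr rfl
  intro A hA
  rw [Finset.card_image_of_injective _ Subtype.val_injective]
  push_cast
  ring

end Shapley

section Pot
variable {N : Type*} [DecidableEq N]

noncomputable def potFn (C : Finset N → ℝ) (S : Finset N) : ℝ :=
  ∑ T ∈ S.powerset.filter (fun T => T.Nonempty),
    ((Nat.factorial (S.card - T.card) : ℝ) * (Nat.factorial (T.card - 1) : ℝ) /
      (Nat.factorial S.card : ℝ)) * C T

lemma coeff_diff (s t : ℕ) (ht1 : 1 ≤ t) (hts : t ≤ s - 1) (hs1 : 1 ≤ s) :
    ((s - t).factorial : ℝ) * ((t - 1).factorial : ℝ) / (s.factorial : ℝ) -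
      ((s - 1 - t).factorial : ℝ) * ((t - 1).factorial : ℝ) / ((s - 1).factorial : ℝ)
    = - (((t.factorial : ℝ) * ((s - 1 - t).factorial : ℝ)) / (s.factorial : ℝ)) := by
  obtain ⟨u, rfl⟩ : ∃ u, t = u + 1 := ⟨t - 1, by omega⟩
  obtain ⟨v, rfl⟩ : ∃ v, s = u + v + 2 := ⟨s - u - 2, by omega⟩
  have e1 : u + v + 2 - (u + 1) = v + 1 := by omega
  have e2 : u + 1 - 1 = u := by omega
  have e3 : u + v + 2 - 1 - (u + 1) = v := by omega
  have e4 : u + v + 2 - 1 = u + v + 1 := by omega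
  rw [e1, e2, e3, e4]
  have f1 : ((u + v + 1).factorial : ℝ) ≠ 0 := Nat.cast_ne_zero.2 (Nat.factorial_ne_zero _)
  have f2 : ((u + v + 2).factorial : ℝ) ≠ 0 := Nat.cast_ne_zero.2 (Nat.factorial_ne_zero _)
  have h1 : ((u + v + 2).factorial : ℝ) = (u + v + 2) * ((u + v + 1).factorial : ℝ) := by
    rw [show u + v + 2 = (u + v + 1) + 1 from rfl, Nat.factorial_succ]; push_cast; ring
  rw [Nat.factorial_succ v, Nat.factorial_succ u, h1]
  field_simp
  push_cast
  ring

lemma potFn_diff (C : Finset N → ℝ) (hC0 : C ∅ = 0)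
    (S : Finset N) (i : N) (hi : i ∈ S) :
    potFn C S - potFn C (S.erase i) = shapley C S i := by
  classical
  have hs1 : 1 ≤ S.card := Finset.card_pos.2 ⟨i, hi⟩
  have hse : (S.erase i).card = S.card - 1 := Finset.card_erase_of_mem hi
  rw [shapley_eq_sum C S i hi]
  rw [potFn, potFn]
  rw [← Finset.sum_filter_add_sum_filter_not (S.powerset.filter (fun T => T.Nonempty))
    (fun T => i ∈ T)]
  have hset2 : (S.powerset.filter (fun T => T.Nonempty)).filter (fun T => i ∉ T)
      = (S.erase i).powerset.filter (fun T => T.Nonempty) := by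
    ext T
    simp only [Finset.mem_filter, Finset.mem_powerset, Finset.subset_erase]
    tauto
  rw [hset2]
  -- RHS split
  have hrhs : ∑ A ∈ (S.erase i).powerset,
      ((Nat.factorial A.card * Nat.factorial (S.card - 1 - A.card) : ℝ) /
        (Nat.factorial S.card : ℝ)) * (C (A ∪ {i}) - C A)
      = (∑ A ∈ (S.erase i).powerset,
          ((Nat.factorial A.card * Nat.factorial (S.card - 1 - A.card) : ℝ) /
            (Nat.factorial S.card : ℝ)) * C (A ∪ {i}))
        - ∑ A ∈ (S.erase i).powerset,
          ((Nat.factorial A.card * Nat.factorial (S.card - 1 - A.card) : ℝ) /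
            (Nat.factorial S.card : ℝ)) * C A := by
    rw [← Finset.sum_sub_distrib]
    apply Finset.sum_congr rfl
    intro A _
    ring
  rw [hrhs]
  -- part 1 : sum over T containing i
  have hpart1 : ∑ T ∈ (S.powerset.filter (fun T => T.Nonempty)).filter (fun T => i ∈ T),
      ((Nat.factorial (S.card - T.card) : ℝ) * (Nat.factorial (T.card - 1) : ℝ) /
        (Nat.factorial S.card : ℝ)) * C T
      = ∑ A ∈ (S.erase i).powerset,
        ((Nat.factorial A.card * Nat.factorial (S.card - 1 - A.card) : ℝ) /
          (Nat.factorial S.card : ℝ)) * C (A ∪ {i}) := by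
    apply Finset.sum_nbij' (fun T => T.erase i) (fun A => insert i A)
    · intro T hT
      simp only [Finset.mem_filter, Finset.mem_powerset] at hT
      rw [Finset.mem_powerset]
      exact Finset.erase_subset_erase i hT.1.1
    · intro A hA
      rw [Finset.mem_powerset] at hA
      simp only [Finset.mem_filter, Finset.mem_powerset]
      have hiA : i ∉ A := fun h => (Finset.mem_erase.1 (hA h)).1 rfl
      refine ⟨⟨Finset.insert_subset hi (hA.trans (Finset.erase_subset i S)), ?_⟩,
        Finset.mem_insert_self i A⟩
      exact ⟨i, Finset.mem_insert_self i A⟩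
    · intro T hT
      simp only [Finset.mem_filter] at hT
      exact Finset.insert_erase hT.2
    · intro A hA
      rw [Finset.mem_powerset] at hA
      exact Finset.erase_insert (fun h => (Finset.mem_erase.1 (hA h)).1 rfl)
    · intro T hT
      simp only [Finset.mem_filter, Finset.mem_powerset] at hT
      have hTi : i ∈ T := hT.2
      have hcard : (T.erase i).card = T.card - 1 := Finset.card_erase_of_mem hTi
      have ht1 : 1 ≤ T.card := Finset.card_pos.2 ⟨i, hTi⟩
      have hts : T.card ≤ S.card := Finset.card_le_card hT.1.1
      have he : T.erase i ∪ {i} = T := by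
        rw [Finset.union_comm, ← Finset.insert_eq, Finset.insert_erase hTi]
      rw [he, hcard]
      have e1 : S.card - 1 - (T.card - 1) = S.card - T.card := by omega
      rw [e1]
      ring
  rw [hpart1]
  -- part 2
  have hpart2 : ∑ T ∈ (S.erase i).powerset.filter (fun T => T.Nonempty),
        ((Nat.factorial (S.card - T.card) : ℝ) * (Nat.factorial (T.card - 1) : ℝ) /
          (Nat.factorial S.card : ℝ)) * C T
      - ∑ T ∈ (S.erase i).powerset.filter (fun T => T.Nonempty),
        ((Nat.factorial ((S.erase i).card - T.card) : ℝ) *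
          (Nat.factorial (T.card - 1) : ℝ) / (Nat.factorial (S.erase i).card : ℝ)) * C T
      = - ∑ A ∈ (S.erase i).powerset,
          ((Nat.factorial A.card * Nat.factorial (S.card - 1 - A.card) : ℝ) /
            (Nat.factorial S.card : ℝ)) * C A := by
    have hfull : ∑ A ∈ (S.erase i).powerset,
        ((Nat.factorial A.card * Nat.factorial (S.card - 1 - A.card) : ℝ) /
          (Nat.factorial S.card : ℝ)) * C A
        = ∑ A ∈ (S.erase i).powerset.filter (fun T => T.Nonempty),
          ((Nat.factorial A.card * Nat.factorial (S.card - 1 - A.card) : ℝ) /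
            (Nat.factorial S.card : ℝ)) * C A := by
      symm
      apply Finset.sum_subset (Finset.filter_subset _ _)
      intro A _ hA2
      have : A = ∅ := by
        by_contra h
        exact hA2 (Finset.mem_filter.2 ⟨‹A ∈ _›, Finset.nonempty_iff_ne_empty.2 h⟩)
      rw [this, hC0, mul_zero]
    rw [hfull, ← Finset.sum_sub_distrib, ← Finset.sum_neg_distrib]
    apply Finset.sum_congr rfl
    intro T hT
    simp only [Finset.mem_filter, Finset.mem_powerset] at hT
    have ht1 : 1 ≤ T.card := Finset.card_pos.2 hT.2
    have hts : T.card ≤ S.card - 1 := hse ▸ Finset.card_le_card hT.1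
    rw [hse]
    have := coeff_diff S.card T.card ht1 hts hs1
    rw [← sub_mul, this]
    ring
  linarith [hpart2]

end Pot


section Coeff
variable {N : Type*} [DecidableEq N]

lemma coeff_sum (S : Finset N) :
    ∑ T ∈ S.powerset.filter (fun T => T.Nonempty),
      ((Nat.factorial (S.card - T.card) : ℝ) * (Nat.factorial (T.card - 1) : ℝ) /
        (Nat.factorial S.card : ℝ)) = harmonicNum S.card := by
  classical
  rw [Finset.sum_filter, Finset.sum_powerset]
  have hinner : ∀ j ∈ Finset.range (S.card + 1),
      ∑ T ∈ Finset.powersetCard j S,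
        (if T.Nonempty then
          ((Nat.factorial (S.card - T.card) : ℝ) * (Nat.factorial (T.card - 1) : ℝ) /
            (Nat.factorial S.card : ℝ)) else 0)
      = (S.card.choose j : ℝ) * (if j = 0 then 0 else
          ((Nat.factorial (S.card - j) : ℝ) * (Nat.factorial (j - 1) : ℝ) /
            (Nat.factorial S.card : ℝ))) := by
    intro j _
    have : ∀ T ∈ Finset.powersetCard j S,
        (if T.Nonempty then
          ((Nat.factorial (S.card - T.card) : ℝ) * (Nat.factorial (T.card - 1) : ℝ) /
            (Nat.factorial S.card : ℝ)) else 0)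
        = (if j = 0 then 0 else
          ((Nat.factorial (S.card - j) : ℝ) * (Nat.factorial (j - 1) : ℝ) /
            (Nat.factorial S.card : ℝ))) := by
      intro T hT
      have hcard : T.card = j := (Finset.mem_powersetCard.1 hT).2
      by_cases hj : j = 0
      · subst hj
        have : T = ∅ := Finset.card_eq_zero.1 hcard
        simp [this]
      · have : T.Nonempty := Finset.card_pos.1 (by omega)
        rw [if_pos this, if_neg hj, hcard]
    rw [Finset.sum_congr rfl this, Finset.sum_const, Finset.card_powersetCard,
      nsmul_eq_mul]
  rw [Finset.sum_congr rfl hinner]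
  have hsplit : Finset.range (S.card + 1) = insert 0 (Finset.Icc 1 S.card) := by
    ext j; simp; omega
  rw [hsplit, Finset.sum_insert (by simp)]
  norm_num
  rw [harmonicNum]
  apply Finset.sum_congr rfl
  intro j hj
  rw [Finset.mem_Icc] at hj
  rw [if_neg (by omega)]
  have hfj : ((S.card.factorial : ℝ)) ≠ 0 := Nat.cast_ne_zero.2 (Nat.factorial_ne_zero _)
  have hjne : (j : ℝ) ≠ 0 := Nat.cast_ne_zero.2 (by omega)
  have key := Nat.choose_mul_factorial_mul_factorial (show j ≤ S.card from hj.2)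
  obtain ⟨u, rfl⟩ : ∃ u, j = u + 1 := ⟨j - 1, by omega⟩
  rw [Nat.factorial_succ] at key
  have keyR : ((S.card.choose (u+1) : ℝ)) * ((u + 1) * (u.factorial : ℝ)) *
      ((S.card - (u+1)).factorial : ℝ) = (S.card.factorial : ℝ) := by
    exact_mod_cast congrArg (Nat.cast : ℕ → ℝ) key
  have e2 : u + 1 - 1 = u := by omega
  rw [e2]
  field_simp
  push_cast at keyR ⊢
  linarith [keyR]

lemma potFn_nonneg (C : Finset N → ℝ) (hnn : ∀ T, 0 ≤ C T) (S : Finset N) :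
    0 ≤ potFn C S := by
  apply Finset.sum_nonneg
  intro T _
  have := hnn T
  positivity

lemma le_potFn (C : Finset N → ℝ) (hC0 : C ∅ = 0) (hnn : ∀ T, 0 ≤ C T)
    (S : Finset N) (n : ℕ) (hcard : S.card ≤ n) :
    C S ≤ (n : ℝ) * potFn C S := by
  rcases S.eq_empty_or_nonempty with rfl | hS
  · rw [hC0]
    have := potFn_nonneg C hnn (∅ : Finset N)
    positivity
  · have hs1 : 1 ≤ S.card := Finset.card_pos.2 hS
    have hmem : S ∈ S.powerset.filter (fun T => T.Nonempty) :=
      Finset.mem_filter.2 ⟨Finset.mem_powerset_self S, hS⟩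
    have hterm : ((Nat.factorial (S.card - S.card) : ℝ) *
        (Nat.factorial (S.card - 1) : ℝ) / (Nat.factorial S.card : ℝ)) * C S
        ≤ potFn C S := by
      exact Finset.single_le_sum (f := fun T =>
        ((Nat.factorial (S.card - T.card) : ℝ) * (Nat.factorial (T.card - 1) : ℝ) /
          (Nat.factorial S.card : ℝ)) * C T)
        (fun T _ => by have := hnn T; positivity) hmem
    have hfacteq : (Nat.factorial S.card : ℝ)
        = (S.card : ℝ) * (Nat.factorial (S.card - 1) : ℝ) := by
      obtain ⟨u, hu⟩ : ∃ u, S.card = u + 1 := ⟨S.card - 1, by omega⟩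
      rw [hu, Nat.factorial_succ]
      push_cast
      ring
    have hco : ((Nat.factorial (S.card - S.card) : ℝ) *
        (Nat.factorial (S.card - 1) : ℝ) / (Nat.factorial S.card : ℝ))
        = 1 / (S.card : ℝ) := by
      rw [Nat.sub_self, Nat.factorial_zero, hfacteq]
      have h1 : ((S.card : ℝ)) ≠ 0 := Nat.cast_ne_zero.2 (by omega)
      have h2 : ((Nat.factorial (S.card - 1) : ℝ)) ≠ 0 :=
        Nat.cast_ne_zero.2 (Nat.factorial_ne_zero _)
      field_simp
      ring
    rw [hco] at hterm
    -- C S / S.card ≤ potFn → C S ≤ n * potFn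
    have h1 : (0:ℝ) < S.card := by
      have : (1:ℝ) ≤ S.card := by exact_mod_cast hs1
      linarith
    have h2 : (S.card : ℝ) ≤ n := by exact_mod_cast hcard
    rw [div_mul_eq_mul_div, one_mul, div_le_iff₀ h1] at hterm
    have hpn := potFn_nonneg C hnn S
    nlinarith

lemma harmonicNum_mono {s n : ℕ} (h : s ≤ n) : harmonicNum s ≤ harmonicNum n := by
  apply Finset.sum_le_sum_of_subset_of_nonneg
  · exact Finset.Icc_subset_Icc_right h
  · intro l _ _
    positivity

lemma potFn_le (C : Finset N → ℝ) (hnn : ∀ T, 0 ≤ C T)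
    (hmono : ∀ T U : Finset N, T ⊆ U → C T ≤ C U)
    (S : Finset N) (n : ℕ) (hcard : S.card ≤ n) :
    potFn C S ≤ harmonicNum n * C S := by
  have h1 : potFn C S ≤ ∑ T ∈ S.powerset.filter (fun T => T.Nonempty),
      ((Nat.factorial (S.card - T.card) : ℝ) * (Nat.factorial (T.card - 1) : ℝ) /
        (Nat.factorial S.card : ℝ)) * C S := by
    apply Finset.sum_le_sum
    intro T hT
    simp only [Finset.mem_filter, Finset.mem_powerset] at hT
    have hCT := hmono T S hT.1
    have : (0:ℝ) ≤ ((Nat.factorial (S.card - T.card) : ℝ) *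
        (Nat.factorial (T.card - 1) : ℝ) / (Nat.factorial S.card : ℝ)) := by positivity
    exact mul_le_mul_of_nonneg_left hCT this
  rw [← Finset.sum_mul, coeff_sum S] at h1
  have h2 : harmonicNum S.card * C S ≤ harmonicNum n * C S :=
    mul_le_mul_of_nonneg_right (harmonicNum_mono hcard) (hnn S)
  linarith

end Coeff

section Game
variable {n : ℕ} {R : Type*} [Fintype R] [DecidableEq R]

lemma mem_users (P : Fin n → Finset R) (r : R) (i : Fin n) :
    i ∈ users P r ↔ r ∈ P i := by simp [users]

lemma users_update (P : Fin n → Finset R) (i : Fin n) (Q : Finset R) (r : R) :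
    users (Function.update P i Q) r =
      if r ∈ Q then insert i (users P r) else (users P r).erase i := by
  ext j
  by_cases hj : j = i
  · subst hj
    by_cases hr : r ∈ Q <;> simp [users, Function.update_self, hr]
  · by_cases hr : r ∈ Q <;>
      simp [users, Function.update_of_ne hj, hr, hj]

lemma pot_eq (Cr : R → Finset (Fin n) → ℝ) (P : Fin n → Finset R) :
    pot Cr P = ∑ r : R, potFn (Cr r) (users P r) := rfl

lemma privCost_eq (Cr : R → Finset (Fin n) → ℝ) (P : Fin n → Finset R) (i : Fin n) :
    privCost Cr P i = ∑ r : R, (if r ∈ P i then shapley (Cr r) (users P r) i else 0) := by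
  rw [privCost, Finset.sum_ite_mem, Finset.univ_inter]

lemma pot_sub_pot (Cr : R → Finset (Fin n) → ℝ) (hC0 : ∀ r, Cr r ∅ = 0)
    (P : Fin n → Finset R) (i : Fin n) (Q : Finset R) :
    pot Cr P - pot Cr (Function.update P i Q)
      = privCost Cr P i - privCost Cr (Function.update P i Q) i := by
  classical
  rw [pot_eq, pot_eq, privCost_eq, privCost_eq, ← Finset.sum_sub_distrib,
    ← Finset.sum_sub_distrib]
  apply Finset.sum_congr rfl
  intro r _
  rw [users_update, Function.update_self]
  by_cases hp : r ∈ P i <;> by_cases hq : r ∈ Q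
  · rw [if_pos hq, if_pos hp, if_pos hq,
      Finset.insert_eq_self.2 ((mem_users P r i).2 hp), sub_self, sub_self]
  · rw [if_neg hq, if_pos hp, if_neg hq, sub_zero]
    exact potFn_diff (Cr r) (hC0 r) (users P r) i ((mem_users P r i).2 hp)
  · rw [if_pos hq, if_neg hp, if_pos hq, zero_sub]
    have hiu : i ∉ users P r := fun h => hp ((mem_users P r i).1 h)
    have := potFn_diff (Cr r) (hC0 r) (insert i (users P r)) i (Finset.mem_insert_self i _)
    rw [Finset.erase_insert hiu] at this
    linarith
  · rw [if_neg hq, if_neg hp, if_neg hq, sub_self,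
      Finset.erase_eq_of_notMem (fun h => hp ((mem_users P r i).1 h)), sub_self]

lemma socCost_le_pot (Cr : R → Finset (Fin n) → ℝ) (hC0 : ∀ r, Cr r ∅ = 0)
    (hnn : ∀ r T, 0 ≤ Cr r T) (P : Fin n → Finset R) :
    socCost Cr P ≤ (n : ℝ) * pot Cr P := by
  rw [socCost, pot_eq, Finset.mul_sum]
  apply Finset.sum_le_sum
  intro r _
  apply le_potFn (Cr r) (hC0 r) (hnn r)
  calc (users P r).card ≤ Fintype.card (Fin n) := Finset.card_le_univ _
    _ = n := Fintype.card_fin n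

lemma pot_le_socCost (Cr : R → Finset (Fin n) → ℝ) (hnn : ∀ r T, 0 ≤ Cr r T)
    (hmono : ∀ r (T U : Finset (Fin n)), T ⊆ U → Cr r T ≤ Cr r U)
    (P : Fin n → Finset R) :
    pot Cr P ≤ harmonicNum n * socCost Cr P := by
  rw [socCost, pot_eq, Finset.mul_sum]
  apply Finset.sum_le_sum
  intro r _
  apply potFn_le (Cr r) (hnn r) (hmono r)
  calc (users P r).card ≤ Fintype.card (Fin n) := Finset.card_le_univ _
    _ = n := Fintype.card_fin n

end Game

/-- The price of stability of Shapley cost sharing games with nondecreasing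
set-dependent costs is at most `n · H_n`. -/
theorem pos_shapley_arbitrary {n : ℕ} {R : Type*} [Fintype R] [DecidableEq R]
    (Strat : Fin n → Set (Finset R)) (Cr : R → Finset (Fin n) → ℝ)
    (hC0 : ∀ r, Cr r ∅ = 0)
    (hnn : ∀ r T, 0 ≤ Cr r T)
    (hmono : ∀ r (T U : Finset (Fin n)), T ⊆ U → Cr r T ≤ Cr r U)
    (hStrat : ∀ i, (Strat i).Nonempty) :
    ∃ P : Fin n → Finset R, isPNE Strat Cr P ∧
      ∀ Q : Fin n → Finset R, (∀ i, Q i ∈ Strat i) →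
        socCost Cr P ≤ (n : ℝ) * harmonicNum n * socCost Cr Q := by
  classical
  set G : Finset (Fin n → Finset R) :=
    Finset.univ.filter (fun P => ∀ i, P i ∈ Strat i) with hG
  have hGne : G.Nonempty := by
    refine ⟨fun i => (hStrat i).choose, ?_⟩
    rw [hG, Finset.mem_filter]
    exact ⟨Finset.mem_univ _, fun i => (hStrat i).choose_spec⟩
  obtain ⟨P, hPG, hPmin⟩ := Finset.exists_min_image G (pot Cr) hGne
  have hPmem : ∀ i, P i ∈ Strat i := (Finset.mem_filter.1 hPG).2
  refine ⟨P, ⟨hPmem, fun i Q hQ => ?_⟩, fun Q hQ => ?_⟩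
  · have hupd : Function.update P i Q ∈ G := by
      rw [hG, Finset.mem_filter]
      refine ⟨Finset.mem_univ _, fun j => ?_⟩
      by_cases hj : j = i
      · subst hj; rw [Function.update_self]; exact hQ
      · rw [Function.update_of_ne hj]; exact hPmem j
    have hle := hPmin _ hupd
    have hex := pot_sub_pot Cr hC0 P i Q
    linarith
  · have hQG : Q ∈ G := by
      rw [hG, Finset.mem_filter]; exact ⟨Finset.mem_univ _, hQ⟩
    have h1 := socCost_le_pot Cr hC0 hnn P
    have h2 := hPmin Q hQG
    have h3 := pot_le_socCost Cr hnn hmono Q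
    have hn0 : (0:ℝ) ≤ (n : ℝ) := Nat.cast_nonneg n
    calc socCost Cr P ≤ (n : ℝ) * pot Cr P := h1
      _ ≤ (n : ℝ) * pot Cr Q := mul_le_mul_of_nonneg_left h2 hn0
      _ ≤ (n : ℝ) * (harmonicNum n * socCost Cr Q) := mul_le_mul_of_nonneg_left h3 hn0
      _ = (n : ℝ) * harmonicNum n * socCost Cr Q := by ring
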